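/- Let 1 < p < q < ∞ and r = q/(q−p). Suppose the inequality sup_{t>0} (h^{**}(t))^{1/p} t^{1/q + 1/(r r₂)} ≤ C sup_{t>0} t^{1/r₁} (h^*(t))^{1/p} holds for all measurable h : (0,∞) → [0,∞) with a constant C independent of h. Then necessarily r₁ > p and 1/q + 1/(r r₂) = 1/r₁. -/

import Mathlib

open MeasureTheory Set
open scoped ENNReal

/-- The nonincreasing rearrangement (w.r.t. Lebesgue measure on `(0,∞)`) of `g`. -/
noncomputable def rearr (g : ℝ → ℝ) (t : ℝ) : ℝ :=
  sInf {l : ℝ | 0 ≤ l ∧ volume {x : ℝ | 0 < x ∧ l < |g x|} ≤ ENNReal.ofReal t}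

/-- The operator `R_{p,q} g(t) = ( t⁻¹ ∫_0^{t^r} (g^*(s))^p ds )^{1/p}`, `r = q/(q-p)`. -/
noncomputable def Rop (p q : ℝ) (g : ℝ → ℝ) (t : ℝ) : ℝ :=
  (t⁻¹ * ∫ s in Set.Ioc (0:ℝ) (t ^ (q / (q - p))), rearr g s ^ p) ^ (1 / p)

/-- The maximal (level) function `h^{**}(t) = t⁻¹ ∫_0^t h^*(s) ds`. -/
noncomputable def dstar (h : ℝ → ℝ) (t : ℝ) : ℝ :=
  t⁻¹ * ∫ s in Set.Ioc (0:ℝ) t, rearr h s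

lemma rearr_ind {a : ℝ} (ha : 0 < a) (t : ℝ) :
    rearr (Set.indicator (Set.Ioo 0 a) (fun _ => 1)) t = if t < a then 1 else 0 := by
  unfold rearr
  have habs : ∀ x : ℝ, |Set.indicator (Set.Ioo 0 a) (fun _ => (1:ℝ)) x|
      = Set.indicator (Set.Ioo 0 a) (fun _ => (1:ℝ)) x := by
    intro x
    exact abs_of_nonneg (Set.indicator_nonneg (fun _ _ => zero_le_one) x)
  split_ifs with hta
  · have hset : {l : ℝ | 0 ≤ l ∧
        volume {x : ℝ | 0 < x ∧ l < |Set.indicator (Set.Ioo 0 a) (fun _ => (1:ℝ)) x|}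
          ≤ ENNReal.ofReal t} = Set.Ici 1 := by
      ext l
      simp only [Set.mem_setOf_eq, Set.mem_Ici, habs]
      constructor
      · rintro ⟨hl0, hvol⟩
        by_contra hl1
        push_neg at hl1
        have hsub : Set.Ioo (0:ℝ) a ⊆ {x : ℝ | 0 < x ∧ l <
            Set.indicator (Set.Ioo 0 a) (fun _ => (1:ℝ)) x} := by
          intro x hx
          refine ⟨hx.1, ?_⟩
          rw [Set.indicator_of_mem hx]
          exact hl1
        have hv : ENNReal.ofReal a ≤ ENNReal.ofReal t := by
          calc ENNReal.ofReal a = volume (Set.Ioo (0:ℝ) a) := by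
                rw [Real.volume_Ioo, sub_zero]
            _ ≤ _ := le_trans (measure_mono hsub) hvol
        exact absurd hv (not_le.2 ((ENNReal.ofReal_lt_ofReal_iff ha).2 hta))
      · intro hl
        refine ⟨le_trans zero_le_one hl, ?_⟩
        have : {x : ℝ | 0 < x ∧ l < Set.indicator (Set.Ioo 0 a) (fun _ => (1:ℝ)) x} = ∅ := by
          ext x
          simp only [Set.mem_setOf_eq, Set.mem_empty_iff_false, iff_false, not_and]
          intro hx hlt
          have hle : Set.indicator (Set.Ioo 0 a) (fun _ => (1:ℝ)) x ≤ 1 := by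
            by_cases h : x ∈ Set.Ioo (0:ℝ) a
            · rw [Set.indicator_of_mem h]
            · rw [Set.indicator_of_notMem h]; exact zero_le_one
          linarith
        rw [this]
        simp
    rw [hset, csInf_Ici]
  · push_neg at hta
    have hset : {l : ℝ | 0 ≤ l ∧
        volume {x : ℝ | 0 < x ∧ l < |Set.indicator (Set.Ioo 0 a) (fun _ => (1:ℝ)) x|}
          ≤ ENNReal.ofReal t} = Set.Ici 0 := by
      ext l
      simp only [Set.mem_setOf_eq, Set.mem_Ici, habs]
      constructor
      · exact fun h => h.1
      · intro hl0
        refine ⟨hl0, ?_⟩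
        have hsub : {x : ℝ | 0 < x ∧ l < Set.indicator (Set.Ioo 0 a) (fun _ => (1:ℝ)) x}
            ⊆ Set.Ioo 0 a := by
          intro x hx
          by_contra hxm
          have := hx.2
          rw [Set.indicator_of_notMem hxm] at this
          linarith
        calc volume {x : ℝ | 0 < x ∧ l < Set.indicator (Set.Ioo 0 a) (fun _ => (1:ℝ)) x}
            ≤ volume (Set.Ioo (0:ℝ) a) := measure_mono hsub
          _ = ENNReal.ofReal a := by rw [Real.volume_Ioo, sub_zero]
          _ ≤ ENNReal.ofReal t := ENNReal.ofReal_le_ofReal hta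
    rw [hset, csInf_Ici]

lemma rearr_pow {ε β : ℝ} (hε : 0 < ε) (hβ : 0 < β) {t : ℝ} (ht : 0 < t) :
    rearr (fun x => if 0 < x then (max x ε) ^ (-β) else 0) t = (max t ε) ^ (-β) := by
  unfold rearr
  set h : ℝ → ℝ := fun x => if 0 < x then (max x ε) ^ (-β) else 0 with hh
  have hmax : ∀ x : ℝ, (0:ℝ) < max x ε := fun x => lt_of_lt_of_le hε (le_max_right x ε)
  have habs : ∀ x : ℝ, 0 < x → |h x| = (max x ε) ^ (-β) := by
    intro x hx
    simp only [hh, if_pos hx]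
    exact abs_of_nonneg (Real.rpow_nonneg (hmax x).le _)
  set c : ℝ := (max t ε) ^ (-β) with hc
  have hcpos : 0 < c := Real.rpow_pos_of_pos (hmax t) _
  have hβ' : -β < 0 := neg_neg_iff_pos.2 hβ
  have hset : {l : ℝ | 0 ≤ l ∧ volume {x : ℝ | 0 < x ∧ l < |h x|} ≤ ENNReal.ofReal t}
      = Set.Ici c := by
    ext l
    simp only [Set.mem_setOf_eq, Set.mem_Ici]
    constructor
    · rintro ⟨hl0, hvol⟩
      by_contra hlc
      push_neg at hlc
      rcases hl0.eq_or_lt with hl0' | hl0'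
      · have hsub : Set.Ioi (0:ℝ) ⊆ {x : ℝ | 0 < x ∧ l < |h x|} := by
          intro x hx
          refine ⟨hx, ?_⟩
          rw [habs x hx, ← hl0']
          exact Real.rpow_pos_of_pos (hmax x) _
        have htop : (⊤ : ℝ≥0∞) ≤ ENNReal.ofReal t :=
          calc (⊤ : ℝ≥0∞) = volume (Set.Ioi (0:ℝ)) := (Real.volume_Ioi).symm
            _ ≤ _ := le_trans (measure_mono hsub) hvol
        exact absurd (lt_of_le_of_lt htop ENNReal.ofReal_lt_top) (lt_irrefl _)
      · set d : ℝ := l ^ (-(1/β)) with hd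
        have hdpos : 0 < d := Real.rpow_pos_of_pos hl0' _
        have hinv : ∀ u : ℝ, 0 < u → (u ^ (-β)) ^ (-(1/β)) = u := by
          intro u hu
          rw [← Real.rpow_mul hu.le]
          have : -β * -(1/β) = 1 := by field_simp
          rw [this, Real.rpow_one]
        have hdl : d ^ (-β) = l := by
          rw [hd, ← Real.rpow_mul hl0'.le]
          have : -(1/β) * -β = 1 := by field_simp
          rw [this, Real.rpow_one]
        have htd : max t ε < d := by
          have := Real.rpow_lt_rpow_of_neg hl0' hlc (by simp [hβ] : -(1/β) < 0)
          rwa [hinv _ (hmax t)] at this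
        have hsub : Set.Ioo 0 d ⊆ {x : ℝ | 0 < x ∧ l < |h x|} := by
          intro x hx
          refine ⟨hx.1, ?_⟩
          rw [habs x hx.1]
          have hxd : max x ε < d :=
            max_lt hx.2 (lt_of_le_of_lt (le_max_right t ε) htd)
          have := Real.rpow_lt_rpow_of_neg (hmax x) hxd hβ'
          rwa [hdl] at this
        have hv : ENNReal.ofReal d ≤ ENNReal.ofReal t := by
          calc ENNReal.ofReal d = volume (Set.Ioo (0:ℝ) d) := by
                rw [Real.volume_Ioo, sub_zero]
            _ ≤ _ := le_trans (measure_mono hsub) hvol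
        have htd' : t < d := lt_of_le_of_lt (le_max_left t ε) htd
        exact absurd hv (not_le.2 ((ENNReal.ofReal_lt_ofReal_iff hdpos).2 htd'))
    · intro hl
      refine ⟨hcpos.le.trans hl, ?_⟩
      have hsub : {x : ℝ | 0 < x ∧ l < |h x|} ⊆ Set.Ioo 0 t := by
        intro x hx
        have hx2 : l < (max x ε) ^ (-β) := by rw [← habs x hx.1]; exact hx.2
        have hmm : max x ε < max t ε := by
          by_contra hge
          push_neg at hge
          have := Real.rpow_le_rpow_of_nonpos (hmax t) hge hβ'.le
          rw [hc] at hl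
          linarith
        have hεlt : ε < max t ε := lt_of_le_of_lt (le_max_right x ε) hmm
        have hmt : max t ε = t := by
          rcases max_cases t ε with ⟨h1, _⟩ | ⟨h1, _⟩
          · exact h1
          · rw [h1] at hεlt; exact absurd hεlt (lt_irrefl _)
        refine ⟨hx.1, ?_⟩
        calc x ≤ max x ε := le_max_left x ε
          _ < max t ε := hmm
          _ = t := hmt
      calc volume {x : ℝ | 0 < x ∧ l < |h x|} ≤ volume (Set.Ioo (0:ℝ) t) :=
            measure_mono hsub
        _ = ENNReal.ofReal t := by rw [Real.volume_Ioo, sub_zero]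
  rw [hset, csInf_Ici]

/-- Necessity: if `sup_t (h^{**}(t))^{1/p} t^{1/q+1/(r r₂)} ≤ C sup_t t^{1/r₁} (h^*(t))^{1/p}`
holds for all nonnegative measurable `h`, then `r₁ > p` and `1/q + 1/(r r₂) = 1/r₁`. -/
theorem stmt_8 (p q r₁ r₂ : ℝ) (hp : 1 < p) (hpq : p < q)
    (hr₁ : 0 < r₁) (hr₂ : 0 < r₂) (C : ℝ)
    (hC : ∀ h : ℝ → ℝ, Measurable h → (∀ x, 0 ≤ h x) →
      ∀ M : ℝ, (∀ t > 0, t ^ (1 / r₁) * (rearr h t) ^ (1 / p) ≤ M) →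
      ∀ t > 0, (dstar h t) ^ (1 / p) * t ^ (1 / q + 1 / ((q / (q - p)) * r₂)) ≤ C * M) :
    p < r₁ ∧ 1 / q + 1 / ((q / (q - p)) * r₂) = 1 / r₁ := by
  set α : ℝ := 1 / q + 1 / ((q / (q - p)) * r₂) with hα
  have hp0 : (0:ℝ) < p := by linarith
  have hp' : (1:ℝ)/p ≠ 0 := by positivity
  -- Step A : test with indicators of (0,a)
  have hA : ∀ a : ℝ, 0 < a → a ^ α ≤ C * a ^ (1/r₁) := by
    intro a ha
    set h : ℝ → ℝ := Set.indicator (Set.Ioo 0 a) (fun _ => 1) with hh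
    have hmeas : Measurable h := measurable_const.indicator measurableSet_Ioo
    have hnonneg : ∀ x, 0 ≤ h x := fun x => Set.indicator_nonneg (fun _ _ => zero_le_one) x
    have hM : ∀ t > (0:ℝ), t ^ (1/r₁) * (rearr h t) ^ (1/p) ≤ a ^ (1/r₁) := by
      intro t ht
      rw [hh, rearr_ind ha t]
      split_ifs with hta
      · rw [Real.one_rpow, mul_one]
        exact Real.rpow_le_rpow ht.le hta.le (by positivity)
      · rw [Real.zero_rpow hp', mul_zero]
        exact Real.rpow_nonneg ha.le _
    have hkey := hC h hmeas hnonneg (a ^ (1/r₁)) hM a ha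
    have hds : dstar h a = 1 := by
      unfold dstar
      have hre : (fun s => rearr h s) = fun s => Set.indicator (Set.Iio a) (fun _ => (1:ℝ)) s := by
        funext s
        rw [hh, rearr_ind ha s, Set.indicator_apply]
        simp [Set.mem_Iio]
      rw [hre, MeasureTheory.setIntegral_indicator measurableSet_Iio]
      have hi : Set.Ioc 0 a ∩ Set.Iio a = Set.Ioo 0 a := by
        ext x
        simp only [Set.mem_inter_iff, Set.mem_Ioc, Set.mem_Iio, Set.mem_Ioo]
        constructor
        · rintro ⟨⟨h1, _⟩, h3⟩; exact ⟨h1, h3⟩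
        · rintro ⟨h1, h2⟩; exact ⟨⟨h1, h2.le⟩, h2⟩
      rw [hi, MeasureTheory.setIntegral_const, measureReal_def, Real.volume_Ioo, sub_zero,
        ENNReal.toReal_ofReal ha.le, smul_eq_mul, mul_one, inv_mul_cancel₀ ha.ne']
    rw [hds, Real.one_rpow, one_mul] at hkey
    exact hkey
  have hC1 : (1:ℝ) ≤ C := by
    have := hA 1 one_pos
    simpa using this
  -- balance condition
  have hbal : α = 1 / r₁ := by
    by_contra hne
    set δ : ℝ := α - 1/r₁ with hδ
    have hδne : δ ≠ 0 := sub_ne_zero.2 hne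
    set a : ℝ := (C + 1) ^ δ⁻¹ with haa
    have hCp : (0:ℝ) < C + 1 := by linarith
    have ha : 0 < a := Real.rpow_pos_of_pos hCp _
    have haδ : a ^ δ = C + 1 := by
      rw [haa, ← Real.rpow_mul hCp.le, inv_mul_cancel₀ hδne, Real.rpow_one]
    have h1 := hA a ha
    have h2 : a ^ α = a ^ δ * a ^ (1/r₁) := by
      rw [← Real.rpow_add ha]
      congr 1
      rw [hδ]; ring
    rw [h2, haδ] at h1
    have h3 : (0:ℝ) < a ^ (1/r₁) := Real.rpow_pos_of_pos ha _
    have : C + 1 ≤ C := le_of_mul_le_mul_right h1 h3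
    linarith
  refine ⟨?_, hbal⟩
  -- Step B : r₁ > p
  by_contra hle
  push_neg at hle
  set β : ℝ := p / r₁ with hβ
  have hβpos : 0 < β := by positivity
  have hβ1 : 1 ≤ β := (one_le_div hr₁).2 hle
  have hCp0 : (0:ℝ) ≤ C ^ p := Real.rpow_nonneg (by linarith) p
  set ε : ℝ := Real.exp (-(C ^ p + 1)) with hεdef
  have hε : 0 < ε := Real.exp_pos _
  have hε1 : ε ≤ 1 := Real.exp_le_one_iff.2 (by linarith)
  set h : ℝ → ℝ := fun x => if 0 < x then (max x ε) ^ (-β) else 0 with hh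
  have hmax : ∀ x : ℝ, (0:ℝ) < max x ε := fun x => lt_of_lt_of_le hε (le_max_right x ε)
  have hcont : Continuous fun x : ℝ => (max x ε) ^ (-β) :=
    (continuous_id.max continuous_const).rpow_const (fun x => Or.inl (hmax x).ne')
  have hmeas : Measurable h := Measurable.ite measurableSet_Ioi hcont.measurable measurable_const
  have hnonneg : ∀ x, 0 ≤ h x := by
    intro x
    rw [hh]
    dsimp only
    split_ifs
    · exact Real.rpow_nonneg (hmax x).le _
    · exact le_refl 0
  have hM : ∀ t > (0:ℝ), t ^ (1/r₁) * (rearr h t) ^ (1/p) ≤ 1 := by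
    intro t ht
    rw [hh, rearr_pow hε hβpos ht, ← Real.rpow_mul (hmax t).le]
    have he : -β * (1/p) = -(1/r₁) := by
      rw [hβ]; field_simp
    rw [he]
    have h1 : t ^ (1/r₁) ≤ (max t ε) ^ (1/r₁) :=
      Real.rpow_le_rpow ht.le (le_max_left t ε) (by positivity)
    calc t ^ (1/r₁) * (max t ε) ^ (-(1/r₁))
        ≤ (max t ε) ^ (1/r₁) * (max t ε) ^ (-(1/r₁)) :=
          mul_le_mul_of_nonneg_right h1 (Real.rpow_nonneg (hmax t).le _)
      _ = (max t ε) ^ ((1/r₁) + -(1/r₁)) := (Real.rpow_add (hmax t) _ _).symm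
      _ = 1 := by rw [add_neg_cancel, Real.rpow_zero]
  have hkey := hC h hmeas hnonneg 1 hM 1 one_pos
  rw [mul_one, Real.one_rpow, mul_one] at hkey
  -- lower bound for dstar h 1
  have hint : IntegrableOn (fun x : ℝ => (max x ε) ^ (-β)) (Set.Ioc 0 1) volume :=
    hcont.integrableOn_Ioc
  have hds_eq : dstar h 1 = ∫ s in Set.Ioc (0:ℝ) 1, (max s ε) ^ (-β) := by
    unfold dstar
    rw [inv_one, one_mul]
    apply MeasureTheory.setIntegral_congr_fun measurableSet_Ioc
    intro s hs
    rw [hh, rearr_pow hε hβpos hs.1]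
  have hinvint : IntegrableOn (fun s : ℝ => s⁻¹) (Set.Ioc ε 1) volume := by
    apply ContinuousOn.integrableOn_compact isCompact_Icc
      ((continuousOn_id (s := Set.Icc ε 1)).inv₀
        (fun x hx => ne_of_gt (lt_of_lt_of_le hε hx.1))) |>.mono_set Set.Ioc_subset_Icc_self
  have hlow : C ^ p + 1 ≤ dstar h 1 := by
    rw [hds_eq]
    have step1 : ∫ s in Set.Ioc ε 1, (max s ε) ^ (-β)
        ≤ ∫ s in Set.Ioc (0:ℝ) 1, (max s ε) ^ (-β) := by
      apply MeasureTheory.setIntegral_mono_set hint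
      · filter_upwards with s using Real.rpow_nonneg (hmax s).le _
      · exact HasSubset.Subset.eventuallyLE (Set.Ioc_subset_Ioc_left hε.le)
    have step2 : ∫ s in Set.Ioc ε 1, s⁻¹ ≤ ∫ s in Set.Ioc ε 1, (max s ε) ^ (-β) := by
      apply MeasureTheory.setIntegral_mono_on hinvint (hint.mono_set (Set.Ioc_subset_Ioc_left hε.le))
        measurableSet_Ioc
      intro s hs
      have hs0 : 0 < s := lt_of_le_of_lt hε.le hs.1
      have hmaxs : max s ε = s := max_eq_left hs.1.le
      rw [hmaxs, ← Real.rpow_neg_one s]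
      exact Real.rpow_le_rpow_of_exponent_ge hs0 hs.2 (neg_le_neg hβ1)
    have step3 : ∫ s in Set.Ioc ε 1, s⁻¹ = C ^ p + 1 := by
      have : ∫ s in Set.Ioc ε 1, s⁻¹ = ∫ s in ε..1, s⁻¹ :=
        (intervalIntegral.integral_of_le hε1).symm
      rw [this, integral_inv]
      · rw [hεdef, one_div, ← Real.exp_neg, Real.log_exp, neg_neg]
      · intro hmem
        rw [Set.uIcc_of_le hε1] at hmem
        exact absurd hmem.1 (not_le.2 hε)
    linarith
  -- contradiction
  have hds0 : (0:ℝ) ≤ C ^ p + 1 := by linarith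
  have h4 : (C ^ p + 1) ^ (1/p) ≤ C := by
    calc (C ^ p + 1) ^ (1/p) ≤ (dstar h 1) ^ (1/p) :=
          Real.rpow_le_rpow hds0 hlow (by positivity)
      _ ≤ C := hkey
  have h5 : ((C ^ p + 1) ^ (1/p)) ^ p ≤ C ^ p :=
    Real.rpow_le_rpow (Real.rpow_nonneg hds0 _) h4 hp0.le
  rw [← Real.rpow_mul hds0, one_div, inv_mul_cancel₀ hp0.ne', Real.rpow_one] at h5
  linarith
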